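/- Let B be a left noetherian unital ring and R a right ideal of B that is nil, i.e., every element of R is nilpotent. Then R is nilpotent: there exists n ≥ 1 such that every product of n elements of R is zero. -/

import Mathlib

section LevitzkiAux

variable {B : Type} [Ring B]

/-- A left ideal is two-sided if it is closed under right multiplication. -/
def IsTwoSided' (K : Submodule B B) : Prop := ∀ x ∈ K, ∀ b : B, x * b ∈ K

/-- Nilpotency of a left ideal, phrased via lists. -/
def IsNilpo' (K : Submodule B B) : Prop :=
  ∃ m : ℕ, 1 ≤ m ∧ ∀ l : List B, l.length = m → (∀ x ∈ l, x ∈ K) → l.prod = 0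

/-- Left annihilator of `a` relative to `K`. -/
def lannRel (K : Submodule B B) (a : B) : Submodule B B :=
  K.comap (LinearMap.toSpanSingleton B B a)

lemma mem_lannRel {K : Submodule B B} {a x : B} : x ∈ lannRel K a ↔ x * a ∈ K := by
  simp [lannRel, LinearMap.toSpanSingleton_apply, smul_eq_mul]

/-- Key step: a relative maximal-annihilator element. -/
lemma exists_good [IsNoetherianRing B] (R : AddSubgroup B)
    (hR : ∀ r ∈ R, ∀ b : B, r * b ∈ R) (hnil : ∀ r ∈ R, IsNilpotent r)
    (K : Submodule B B) (hK2 : IsTwoSided' K)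
    (r₀ : B) (hr₀R : r₀ ∈ R) (hr₀K : r₀ ∉ K) :
    ∃ a, a ∈ R ∧ a ∉ K ∧ ∀ b : B, a * b * a ∈ K := by
  classical
  set S : Set (Submodule B B) := (fun r => lannRel K r) '' {r : B | r ∈ R ∧ r ∉ K} with hS
  have hSne : S.Nonempty := ⟨lannRel K r₀, r₀, ⟨hr₀R, hr₀K⟩, rfl⟩
  obtain ⟨L, hLS, hLmax⟩ := (set_has_maximal_iff_noetherian.mpr inferInstance) S hSne
  obtain ⟨a, ⟨haR, haK⟩, rfl⟩ := hLS
  refine ⟨a, haR, haK, fun b => ?_⟩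
  by_cases hab : a * b ∈ K
  · exact hK2 _ hab a
  · obtain ⟨N, hN⟩ := hnil (a * b) (hR a haR b)
    have hex : ∃ n, (a * b) ^ n ∈ K := ⟨N, by rw [hN]; exact K.zero_mem⟩
    set n := Nat.find hex with hn
    have hnK : (a * b) ^ n ∈ K := Nat.find_spec hex
    have hn0 : n ≠ 0 := by
      intro h
      rw [h, pow_zero] at hnK
      exact haK (by simpa using K.smul_mem a hnK)
    have hn1 : n ≠ 1 := by
      intro h
      rw [h, pow_one] at hnK
      exact hab hnK
    obtain ⟨k, hk⟩ : ∃ k, n = k + 2 := ⟨n - 2, by omega⟩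
    set c : B := (a * b) ^ (k + 1) with hc
    have hceq : c = a * (b * (a * b) ^ k) := by
      rw [hc, pow_succ', mul_assoc]
    have hcR : c ∈ R := by rw [hceq]; exact hR a haR _
    have hcK : c ∉ K := Nat.find_min hex (by omega)
    have hle : lannRel K a ≤ lannRel K c := by
      intro x hx
      rw [mem_lannRel] at hx ⊢
      rw [hceq, ← mul_assoc]
      exact hK2 _ hx _
    have heq : lannRel K c = lannRel K a := by
      have hmem : lannRel K c ∈ S := ⟨c, ⟨hcR, hcK⟩, rfl⟩
      have := hLmax _ hmem
      exact (eq_of_le_of_not_lt hle this).symm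
    have habc : a * b ∈ lannRel K c := by
      rw [mem_lannRel, hc, ← pow_succ', ← hk]
      exact hnK
    rw [heq, mem_lannRel] at habc
    exact habc

end LevitzkiAux

section LevitzkiExtend

variable {B : Type} [Ring B]

lemma pair_in (K : Submodule B B) (hK2 : IsTwoSided' K)
    (a : B) (hab : ∀ b : B, a * b * a ∈ K) :
    ∀ u ∈ K ⊔ Submodule.span B {x : B | ∃ y, x = a * y},
    ∀ v ∈ K ⊔ Submodule.span B {x : B | ∃ y, x = a * y}, u * v ∈ K := by
  set S : Submodule B B := Submodule.span B {x : B | ∃ y, x = a * y} with hSdef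
  -- first: generators times span elements lie in K
  have L1 : ∀ t ∈ S, ∀ u : B, (a * u) * t ∈ K := by
    intro t ht
    refine Submodule.span_induction ?_ ?_ ?_ ?_ ht
    · rintro x ⟨y, rfl⟩ u
      have : (a * u) * (a * y) = (a * u * a) * y := by noncomm_ring
      rw [this]
      exact hK2 _ (hab u) y
    · intro u; rw [mul_zero]; exact K.zero_mem
    · intro x y _ _ hx hy u
      rw [mul_add]; exact K.add_mem (hx u) (hy u)
    · intro c x _ hx u
      have : (a * u) * (c • x) = (a * (u * c)) * x := by
        simp only [smul_eq_mul]; noncomm_ring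
      rw [this]; exact hx (u * c)
  have L2 : ∀ s ∈ S, ∀ t ∈ S, s * t ∈ K := by
    intro s hs
    refine Submodule.span_induction ?_ ?_ ?_ ?_ hs
    · rintro x ⟨y, rfl⟩ t ht; exact L1 t ht y
    · intro t _; rw [zero_mul]; exact K.zero_mem
    · intro x y _ _ hx hy t ht
      rw [add_mul]; exact K.add_mem (hx t ht) (hy t ht)
    · intro c x _ hx t ht
      have : (c • x) * t = c • (x * t) := by simp [smul_eq_mul, mul_assoc]
      rw [this]; exact K.smul_mem c (hx t ht)
  intro u hu v hv
  rw [Submodule.mem_sup] at hu hv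
  obtain ⟨k₁, hk₁, s₁, hs₁, rfl⟩ := hu
  obtain ⟨k₂, hk₂, s₂, hs₂, rfl⟩ := hv
  have e : (k₁ + s₁) * (k₂ + s₂) = k₁ * (k₂ + s₂) + (s₁ * k₂ + s₁ * s₂) := by noncomm_ring
  rw [e]
  refine K.add_mem (hK2 _ hk₁ _) (K.add_mem ?_ (L2 _ hs₁ _ hs₂))
  have : s₁ * k₂ = s₁ • k₂ := rfl
  rw [this]; exact K.smul_mem s₁ hk₂

lemma chunk (K K' : Submodule B B)
    (h2 : ∀ u ∈ K', ∀ v ∈ K', u * v ∈ K) :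
    ∀ m (l : List B), l.length = 2 * m → (∀ x ∈ l, x ∈ K') →
      ∃ l₂ : List B, l₂.length = m ∧ (∀ x ∈ l₂, x ∈ K) ∧ l₂.prod = l.prod := by
  intro m
  induction m with
  | zero =>
    intro l hl _
    rw [Nat.mul_zero, List.length_eq_zero_iff] at hl
    exact ⟨[], rfl, by simp, by rw [hl]⟩
  | succ m ih =>
    intro l hl hmem
    match l with
    | x :: y :: t =>
      simp only [List.length_cons] at hl
      obtain ⟨l₂, hlen, hmem₂, hprod⟩ := ih t (by omega)
        (fun z hz => hmem z (by simp [hz]))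
      refine ⟨(x * y) :: l₂, by simp [hlen], ?_, ?_⟩
      · intro z hz
        rcases List.mem_cons.mp hz with h | h
        · rw [h]
          exact h2 x (hmem x (by simp)) y (hmem y (by simp))
        · exact hmem₂ z h
      · simp only [List.prod_cons, hprod, mul_assoc]
    | [] => simp at hl
    | [x] => simp at hl; omega

lemma extend_ideal (K : Submodule B B) (hK2 : IsTwoSided' K) (hKn : IsNilpo' K)
    (a : B) (haK : a ∉ K) (hab : ∀ b : B, a * b * a ∈ K) :
    ∃ K' : Submodule B B, IsTwoSided' K' ∧ IsNilpo' K' ∧ K < K' := by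
  set S : Submodule B B := Submodule.span B {x : B | ∃ y, x = a * y} with hSdef
  have hS2 : IsTwoSided' S := by
    intro x hx b
    refine Submodule.span_induction ?_ ?_ ?_ ?_ hx
    · rintro z ⟨y, rfl⟩
      exact Submodule.subset_span ⟨y * b, by rw [mul_assoc]⟩
    · rw [zero_mul]; exact S.zero_mem
    · intro u v _ _ hu hv; rw [add_mul]; exact S.add_mem hu hv
    · intro c u _ hu
      have : (c • u) * b = c • (u * b) := by simp [smul_eq_mul, mul_assoc]
      rw [this]; exact S.smul_mem c hu
  refine ⟨K ⊔ S, ?_, ?_, ?_⟩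
  · intro x hx b
    rw [Submodule.mem_sup] at hx ⊢
    obtain ⟨k, hk, s, hs, rfl⟩ := hx
    exact ⟨k * b, hK2 _ hk b, s * b, hS2 _ hs b, by rw [add_mul]⟩
  · obtain ⟨m, hm1, hm⟩ := hKn
    refine ⟨2 * m, by omega, fun l hl hmem => ?_⟩
    obtain ⟨l₂, hlen, hmem₂, hprod⟩ :=
      chunk K (K ⊔ S) (pair_in K hK2 a hab) m l hl hmem
    rw [← hprod]
    exact hm l₂ hlen hmem₂
  · refine lt_of_le_of_ne le_sup_left (fun h => haK ?_)
    have : a ∈ S := Submodule.subset_span ⟨1, (mul_one a).symm⟩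
    rw [h]
    exact Submodule.mem_sup_right this

end LevitzkiExtend

/-- Let `B` be a left noetherian unital ring and `R` a right ideal of `B` (an additive
subgroup closed under right multiplication by elements of `B`) which is nil, i.e. every
element of `R` is nilpotent. Then `R` is nilpotent: there is `n ≥ 1` such that every
product of `n` elements of `R` vanishes. -/
theorem nil_right_ideal_is_nilpotent (B : Type) [Ring B] [IsNoetherianRing B]
    (R : AddSubgroup B) (hR : ∀ r ∈ R, ∀ b : B, r * b ∈ R)
    (hnil : ∀ r ∈ R, IsNilpotent r) :
    ∃ n : ℕ, 1 ≤ n ∧ ∀ f : Fin n → B, (∀ i, f i ∈ R) → (List.ofFn f).prod = 0 := by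
  classical
  set T : Set (Submodule B B) := {I | IsTwoSided' I ∧ IsNilpo' I} with hT
  have hbot : (⊥ : Submodule B B) ∈ T := by
    constructor
    · intro x hx b
      rw [Submodule.mem_bot] at hx ⊢
      rw [hx, zero_mul]
    · refine ⟨1, le_refl 1, fun l hl hmem => ?_⟩
      rw [List.length_eq_one_iff] at hl
      obtain ⟨x, rfl⟩ := hl
      have := hmem x (by simp)
      rw [Submodule.mem_bot] at this
      simp [this]
  obtain ⟨K, hKT, hKmax⟩ := (set_has_maximal_iff_noetherian.mpr inferInstance) T ⟨⊥, hbot⟩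
  obtain ⟨hK2, hKn⟩ := hKT
  have hRK : ∀ r ∈ R, r ∈ K := by
    by_contra hcon
    push_neg at hcon
    obtain ⟨r₀, hr₀R, hr₀K⟩ := hcon
    obtain ⟨a, haR, haK, hab⟩ := exists_good R hR hnil K hK2 r₀ hr₀R hr₀K
    obtain ⟨K', hK'2, hK'n, hlt⟩ := extend_ideal K hK2 hKn a haK hab
    exact hKmax K' ⟨hK'2, hK'n⟩ hlt
  obtain ⟨m, hm1, hm⟩ := hKn
  refine ⟨m, hm1, fun f hf => ?_⟩
  refine hm (List.ofFn f) (List.length_ofFn (f := f)) (fun x hx => ?_)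
  rw [List.mem_ofFn] at hx
  obtain ⟨i, rfl⟩ := hx
  exact hRK (f i) (hf i)
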